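/- Let W and T be real n×n matrices with W symmetric positive definite and T symmetric positive semidefinite, and let α, β > 0. With M = (1/(α+β))·(αW + T)(W - iT)^{-1}(W + βT) and N = (1/(α+β))·(T - βW)(W - iT)^{-1}(W - αT) (the matrix W - iT being invertible), one has M - N = W + iT; that is, (M, N) is a splitting of the coefficient matrix A = W + iT. -/

import Mathlib

open Matrix

lemma dot_map_ofReal {n : ℕ} (M : Matrix (Fin n) (Fin n) ℝ)
    (hsym : ∀ i j, M i j = M j i) (v : Fin n → ℂ) :
    star v ⬝ᵥ (M.map Complex.ofReal) *ᵥ v =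
      ((( (fun i => (v i).re) ⬝ᵥ M *ᵥ (fun i => (v i).re)
        + (fun i => (v i).im) ⬝ᵥ M *ᵥ (fun i => (v i).im) : ℝ)) : ℂ) := by
  rw [Complex.ext_iff]
  constructor
  · simp only [dotProduct, mulVec, Matrix.map_apply, Pi.star_apply, Complex.star_def,
      Complex.re_sum, Complex.im_sum, Complex.mul_re, Complex.mul_im, Complex.conj_re,
      Complex.conj_im, Complex.ofReal_re, Complex.ofReal_im, zero_mul, sub_zero, add_zero,
      neg_mul, neg_neg, sub_neg_eq_add, Complex.add_re, Complex.ofReal_add]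
    rw [← Finset.sum_add_distrib]
  · simp only [dotProduct, mulVec, Matrix.map_apply, Pi.star_apply, Complex.star_def,
      Complex.re_sum, Complex.im_sum, Complex.mul_re, Complex.mul_im, Complex.conj_re,
      Complex.conj_im, Complex.ofReal_re, Complex.ofReal_im, zero_mul, sub_zero, add_zero,
      neg_mul, Complex.add_im, Complex.ofReal_im, ← sub_eq_add_neg]
    have key : ∑ i, ∑ j, (v i).re * (M i j * (v j).im)
        = ∑ i, ∑ j, (v i).im * (M i j * (v j).re) := by
      rw [Finset.sum_comm]
      exact Finset.sum_congr rfl fun i _ => Finset.sum_congr rfl fun j _ => by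
        rw [hsym i j]; ring
    simp only [Finset.mul_sum]
    rw [Finset.sum_sub_distrib, key, sub_self]

lemma ttscsp_det_ne_zero {n : ℕ} (W T : Matrix (Fin n) (Fin n) ℝ)
    (hW : W.PosDef) (hT : T.PosSemidef) :
    ((W.map Complex.ofReal) - Complex.I • (T.map Complex.ofReal)).det ≠ 0 := by
  intro hdet
  obtain ⟨v, hv, hv0⟩ := (Matrix.exists_mulVec_eq_zero_iff).mpr hdet
  have hWsym : ∀ i j, W i j = W j i := fun i j => by
    have h := congrFun (congrFun hW.1 i) j
    simpa [Matrix.conjTranspose_apply] using h.symm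
  have hTsym : ∀ i j, T i j = T j i := fun i j => by
    have h := congrFun (congrFun hT.1 i) j
    simpa [Matrix.conjTranspose_apply] using h.symm
  have h1 : (W.map Complex.ofReal) *ᵥ v = Complex.I • ((T.map Complex.ofReal) *ᵥ v) := by
    have h := hv0
    rw [Matrix.sub_mulVec, sub_eq_zero] at h
    rw [h, Matrix.smul_mulVec]
  have h2 : star v ⬝ᵥ (W.map Complex.ofReal) *ᵥ v
      = Complex.I * (star v ⬝ᵥ (T.map Complex.ofReal) *ᵥ v) := by
    rw [h1, dotProduct_smul, smul_eq_mul]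
  rw [dot_map_ofReal W hWsym v, dot_map_ofReal T hTsym v] at h2
  set x : Fin n → ℝ := fun i => (v i).re with hx
  set y : Fin n → ℝ := fun i => (v i).im with hy
  have hre : x ⬝ᵥ W *ᵥ x + y ⬝ᵥ W *ᵥ y = 0 := by
    have := congrArg Complex.re h2
    simpa [Complex.mul_re] using this
  have hxy : x ≠ 0 ∨ y ≠ 0 := by
    by_contra h
    push_neg at h
    apply hv
    funext i
    have h1' := congrFun h.1 i
    have h2' := congrFun h.2 i
    simp only [hx, hy, Pi.zero_apply] at h1' h2'
    exact Complex.ext h1' h2'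
  have hWx : ∀ z : Fin n → ℝ, 0 ≤ z ⬝ᵥ W *ᵥ z := fun z => by
    simpa using hW.posSemidef.dotProduct_mulVec_nonneg z
  have hWpos : ∀ z : Fin n → ℝ, z ≠ 0 → 0 < z ⬝ᵥ W *ᵥ z := fun z hz => by
    simpa using hW.dotProduct_mulVec_pos hz
  have : 0 < x ⬝ᵥ W *ᵥ x + y ⬝ᵥ W *ᵥ y := by
    rcases hxy with h | h
    · have := hWpos x h; have := hWx y; linarith
    · have := hWpos y h; have := hWx x; linarith
  linarith [hre, this]

/-- **The TTSCSP splitting.** With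
`M = (1/(α+β))·(αW + T)(W - iT)⁻¹(W + βT)` and
`N = (1/(α+β))·(T - βW)(W - iT)⁻¹(W - αT)`,
one has `M - N = W + iT`, i.e. `(M, N)` is a splitting of `A = W + iT`. -/
theorem ttscsp_splitting
    {n : ℕ}
    (W T : Matrix (Fin n) (Fin n) ℝ)
    (hW : W.PosDef) (hT : T.PosSemidef)
    (α β : ℝ) (hα : 0 < α) (hβ : 0 < β)
    (Wc Tc M N : Matrix (Fin n) (Fin n) ℂ)
    (hWc : Wc = W.map Complex.ofReal)
    (hTc : Tc = T.map Complex.ofReal)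
    (hM : M = (((α : ℂ) + β)⁻¹) • (((α : ℂ) • Wc + Tc) * (Wc - Complex.I • Tc)⁻¹ * (Wc + (β : ℂ) • Tc)))
    (hN : N = (((α : ℂ) + β)⁻¹) • ((Tc - (β : ℂ) • Wc) * (Wc - Complex.I • Tc)⁻¹ * (Wc - (α : ℂ) • Tc))) :
    M - N = Wc + Complex.I • Tc := by
  have hdet : IsUnit (Wc - Complex.I • Tc).det := by
    rw [hWc, hTc]
    exact isUnit_iff_ne_zero.mpr (ttscsp_det_ne_zero W T hW hT)
  set D : Matrix (Fin n) (Fin n) ℂ := Wc - Complex.I • Tc with hD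
  set X : Matrix (Fin n) (Fin n) ℂ := D⁻¹ with hX
  have hXl : D * X = 1 := Matrix.mul_nonsing_inv D hdet
  have hXr : X * D = 1 := Matrix.nonsing_inv_mul D hdet
  have hWD : Wc = D + Complex.I • Tc := by rw [hD]; abel
  have key : ∀ (a : ℂ) (P Q : Matrix (Fin n) (Fin n) ℂ),
      (a • D + P) * X * (D + Q) = a • D + a • Q + P + P * X * Q := by
    intro a P Q
    have h1 : (a • D + P) * X = a • (1 : Matrix (Fin n) (Fin n) ℂ) + P * X := by
      rw [add_mul, smul_mul_assoc, hXl]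
    rw [h1, add_mul, mul_add, mul_add, smul_mul_assoc, smul_mul_assoc, one_mul, one_mul,
      mul_assoc P X D, hXr, mul_one]
    abel
  have hne : ((α : ℂ) + β) ≠ 0 := by
    rw [← Complex.ofReal_add]
    exact Complex.ofReal_ne_zero.mpr (by positivity)
  rw [hM, hN, hWD]
  have e1 : (α : ℂ) • (D + Complex.I • Tc) + Tc
      = (α : ℂ) • D + ((1 + Complex.I * α) • Tc) := by module
  have e2 : (D + Complex.I • Tc) + (β : ℂ) • Tc = D + (((β : ℂ) + Complex.I) • Tc) := by module
  have e3 : Tc - (β : ℂ) • (D + Complex.I • Tc)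
      = (-(β : ℂ)) • D + ((1 - Complex.I * β) • Tc) := by module
  have e4 : (D + Complex.I • Tc) - (α : ℂ) • Tc = D + ((Complex.I - (α : ℂ)) • Tc) := by module
  rw [e1, e2, e3, e4, key, key]
  have eS : ∀ c d : ℂ, (c • Tc) * X * (d • Tc) = (c * d) • (Tc * X * Tc) := by
    intro c d
    rw [smul_mul_assoc, smul_mul_assoc, mul_smul_comm, smul_smul]
  rw [eS, eS]
  match_scalars
  · field_simp
    ring
  · field_simp
    ring
  · field_simp
    linear_combination ((↑α + ↑β) : ℂ) * Complex.I_sq
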